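/- The function p ↦ f_s(p) is monotone nondecreasing on the interval [0,1]: for all real p, q with 0 ≤ p ≤ q ≤ 1, one has f_s(p) ≤ f_s(q). -/

import Mathlib

open Finset

section BernAux
open Polynomial

lemma bern_eval_nonneg {n ν : ℕ} {x : ℝ} (h0 : 0 ≤ x) (h1 : x ≤ 1) :
    0 ≤ (bernsteinPolynomial ℝ n ν).eval x := by
  simp only [bernsteinPolynomial, eval_mul, eval_pow, eval_natCast, eval_X, eval_sub, eval_one]
  have : (0:ℝ) ≤ 1 - x := by linarith
  positivity

lemma bern_sum_mono (d : ℕ) (h : ℕ → ℝ) (hmono : ∀ m, m < d → h m ≤ h (m + 1))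
    {p q : ℝ} (hp : 0 ≤ p) (hpq : p ≤ q) (hq : q ≤ 1) :
    ∑ m ∈ range (d + 1), h m * (bernsteinPolynomial ℝ d m).eval p ≤
      ∑ m ∈ range (d + 1), h m * (bernsteinPolynomial ℝ d m).eval q := by
  rcases Nat.eq_zero_or_pos d with rfl | hd
  · simp [bernsteinPolynomial]
  obtain ⟨e, rfl⟩ : ∃ e, d = e + 1 := ⟨d - 1, by omega⟩
  set F : ℝ[X] := ∑ m ∈ range (e + 2), C (h m) * bernsteinPolynomial ℝ (e + 1) m with hF
  have hFeval : ∀ x : ℝ, F.eval x =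
      ∑ m ∈ range (e + 2), h m * (bernsteinPolynomial ℝ (e + 1) m).eval x := by
    intro x; simp [hF, eval_finset_sum]
  have hderiv : ∀ x : ℝ, x ∈ Set.Ioo (0:ℝ) 1 → 0 ≤ F.derivative.eval x := by
    intro x hx
    have hder : F.derivative.eval x =
        ∑ m ∈ range (e + 2), h m * (Polynomial.derivative (bernsteinPolynomial ℝ (e + 1) m)).eval x := by
      simp [hF, derivative_sum, eval_finset_sum]
    set b : ℕ → ℝ := fun ν => (bernsteinPolynomial ℝ e ν).eval x with hb
    have hbsuc : ∀ ν, (Polynomial.derivative (bernsteinPolynomial ℝ (e + 1) (ν + 1))).eval x =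
        ((e:ℝ) + 1) * (b ν - b (ν + 1)) := by
      intro ν
      rw [bernsteinPolynomial.derivative_succ]
      push_cast [hb]
      simp
    have hbzero : (Polynomial.derivative (bernsteinPolynomial ℝ (e + 1) 0)).eval x =
        -((e:ℝ) + 1) * b 0 := by
      rw [bernsteinPolynomial.derivative_zero]
      push_cast [hb]
      simp
    have hbe1 : b (e + 1) = 0 := by
      simp [hb, bernsteinPolynomial.eq_zero_of_lt ℝ (Nat.lt_succ_self e)]
    have key : F.derivative.eval x =
        ((e:ℝ) + 1) * ∑ ν ∈ range (e + 1), (h (ν + 1) - h ν) * b ν := by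
      have e1 : ∑ ν ∈ range (e + 1), h (ν + 1) * b (ν + 1)
          = ∑ ν ∈ range (e + 1), h ν * b ν - h 0 * b 0 := by
        have A := Finset.sum_range_succ' (fun ν => h ν * b ν) (e + 1)
        have B := Finset.sum_range_succ (fun ν => h ν * b ν) (e + 1)
        rw [B] at A
        simp only [hbe1, mul_zero, add_zero] at A
        linarith
      have L : ∑ ν ∈ range (e + 1), h (ν + 1) * (((e:ℝ) + 1) * (b ν - b (ν + 1)))
          = ((e:ℝ) + 1) * ∑ ν ∈ range (e + 1), h (ν + 1) * b ν
            - ((e:ℝ) + 1) * ∑ ν ∈ range (e + 1), h (ν + 1) * b (ν + 1) := by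
        rw [← mul_sub, ← Finset.sum_sub_distrib, Finset.mul_sum]
        exact Finset.sum_congr rfl fun ν _ => by ring
      have R : ∑ ν ∈ range (e + 1), (h (ν + 1) - h ν) * b ν
          = ∑ ν ∈ range (e + 1), h (ν + 1) * b ν - ∑ ν ∈ range (e + 1), h ν * b ν := by
        rw [← Finset.sum_sub_distrib]
        exact Finset.sum_congr rfl fun ν _ => by ring
      rw [hder, Finset.sum_range_succ']
      simp only [hbsuc, hbzero]
      rw [L, e1, R]
      ring
    rw [key]
    apply mul_nonneg (by positivity)
    apply Finset.sum_nonneg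
    intro ν hν
    apply mul_nonneg
    · have := hmono ν (by simpa using Finset.mem_range.mp hν)
      linarith
    · exact bern_eval_nonneg (le_of_lt hx.1) (le_of_lt hx.2)
  have hmonoF : MonotoneOn (fun x => F.eval x) (Set.Icc 0 1) := by
    apply monotoneOn_of_deriv_nonneg (convex_Icc 0 1) (F.continuousOn)
    · exact F.differentiable.differentiableOn
    · intro x hx
      rw [Polynomial.deriv]
      exact hderiv x (by rwa [interior_Icc] at hx)
  have := hmonoF ⟨hp, le_trans hpq hq⟩ ⟨le_trans hp hpq, hq⟩ hpq
  simpa [hFeval] using this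

end BernAux

/-- Maximum of a real-valued function over a finite set (0 on the empty set). -/
noncomputable def finsetMax {α : Type*} (x : α → ℝ) (S : Finset α) : ℝ :=
  if h : S.Nonempty then S.sup' h x else 0

/-- `sggProgress G a s p` is `f_s(p)`: the conditional expectation of the squared
discrepancy `(a s - a t*)²` of the communication partner `t*` chosen by one step of
sample greedy gossip at node `s` with node activation probability `p`. -/
noncomputable def sggProgress {V : Type*} [Fintype V] [DecidableEq V]
    (G : SimpleGraph V) [DecidableRel G.Adj] (a : V → ℝ) (s : V) (p : ℝ) : ℝ :=
  (∑ m ∈ Finset.Icc 1 (G.neighborFinset s).card,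
      p ^ m * (1 - p) ^ ((G.neighborFinset s).card - m) *
        ∑ S ∈ (G.neighborFinset s).powersetCard m,
          finsetMax (fun t => (a s - a t) ^ 2) S)
    + (1 - p) ^ (G.neighborFinset s).card * (1 / ((G.neighborFinset s).card : ℝ)) *
        ∑ t ∈ G.neighborFinset s, (a s - a t) ^ 2

/-- `f_s` is monotone nondecreasing on `[0,1]`. -/
theorem sggProgress_monotone
    {V : Type*} [Fintype V] [DecidableEq V]
    (G : SimpleGraph V) [DecidableRel G.Adj] (a : V → ℝ) (s : V)
    (hN : (G.neighborFinset s).Nonempty)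
    (p q : ℝ) (hp : 0 ≤ p) (hpq : p ≤ q) (hq : q ≤ 1) :
    sggProgress G a s p ≤ sggProgress G a s q := by

  classical
  set N : Finset V := G.neighborFinset s with hNdef
  set d : ℕ := N.card with hd
  have hd1 : 1 ≤ d := Finset.card_pos.mpr hN
  set f : V → ℝ := fun t => (a s - a t) ^ 2 with hf
  have hf0 : ∀ t, 0 ≤ f t := fun t => sq_nonneg _
  have hmax0 : ∀ S : Finset V, 0 ≤ finsetMax f S := by
    intro S
    unfold finsetMax
    split
    · next hne => obtain ⟨t, ht⟩ := hne; exact le_trans (hf0 t) (Finset.le_sup' f ht)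
    · exact le_refl 0
  set c : ℕ → ℝ := fun m => ∑ S ∈ N.powersetCard m, finsetMax f S with hc
  set avg : ℝ := (1 / (d : ℝ)) * ∑ t ∈ N, f t with havg
  set h : ℕ → ℝ := fun m => if m = 0 then avg else c m / (d.choose m : ℝ) with hh
  -- c 1 equals the plain sum
  have hc1 : c 1 = ∑ t ∈ N, f t := by
    rw [hc]
    simp only [Finset.powersetCard_one, Finset.sum_map, Function.Embedding.coeFn_mk]
    apply Finset.sum_congr rfl
    intro t _
    unfold finsetMax
    rw [dif_pos (Finset.singleton_nonempty t), Finset.sup'_singleton]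
  -- key combinatorial inequality
  have key : ∀ m, 1 ≤ m → m < d → ((d - m : ℕ) : ℝ) * c m ≤ ((m + 1 : ℕ) : ℝ) * c (m + 1) := by
    intro m hm1 hmd
    have lhs : ((d - m : ℕ) : ℝ) * c m
        = ∑ S ∈ N.powersetCard m, ∑ _t ∈ N \ S, finsetMax f S := by
      rw [hc, Finset.mul_sum]
      apply Finset.sum_congr rfl
      intro S hS
      obtain ⟨hSsub, hScard⟩ := Finset.mem_powersetCard.mp hS
      rw [Finset.sum_const, Finset.card_sdiff_of_subset hSsub, hScard, nsmul_eq_mul]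
    have rhs : ((m + 1 : ℕ) : ℝ) * c (m + 1)
        = ∑ T ∈ N.powersetCard (m + 1), ∑ _t ∈ T, finsetMax f T := by
      rw [hc, Finset.mul_sum]
      apply Finset.sum_congr rfl
      intro T hT
      obtain ⟨hTsub, hTcard⟩ := Finset.mem_powersetCard.mp hT
      rw [Finset.sum_const, hTcard, nsmul_eq_mul]
    have step : ∑ S ∈ N.powersetCard m, ∑ _t ∈ N \ S, finsetMax f S
        ≤ ∑ S ∈ N.powersetCard m, ∑ t ∈ N \ S, finsetMax f (insert t S) := by
      apply Finset.sum_le_sum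
      intro S hS
      obtain ⟨hSsub, hScard⟩ := Finset.mem_powersetCard.mp hS
      have hSne : S.Nonempty := Finset.card_pos.mp (by omega)
      apply Finset.sum_le_sum
      intro t _
      unfold finsetMax
      rw [dif_pos hSne, dif_pos (Finset.insert_nonempty t S)]
      exact Finset.sup'_mono f (Finset.subset_insert t S) hSne
    have bij : ∑ S ∈ N.powersetCard m, ∑ t ∈ N \ S, finsetMax f (insert t S)
        = ∑ T ∈ N.powersetCard (m + 1), ∑ t ∈ T, finsetMax f T := by
      rw [Finset.sum_sigma' (N.powersetCard m) (fun S => N \ S)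
        (fun S t => finsetMax f (insert t S)),
        Finset.sum_sigma' (N.powersetCard (m + 1)) (fun T => T) (fun T _ => finsetMax f T)]
      apply Finset.sum_bij'
        (i := fun (x : Σ _ : Finset V, V) _ => (⟨insert x.2 x.1, x.2⟩ : Σ _ : Finset V, V))
        (j := fun (x : Σ _ : Finset V, V) _ => (⟨x.1.erase x.2, x.2⟩ : Σ _ : Finset V, V))
      · rintro ⟨S, t⟩ hx
        rw [Finset.mem_sigma] at hx
        obtain ⟨hS, ht⟩ := hx
        obtain ⟨hSsub, hScard⟩ := Finset.mem_powersetCard.mp hS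
        rw [Finset.mem_sdiff] at ht
        rw [Finset.mem_sigma]
        constructor
        · rw [Finset.mem_powersetCard]
          exact ⟨Finset.insert_subset ht.1 hSsub, by rw [Finset.card_insert_of_notMem ht.2, hScard]⟩
        · exact Finset.mem_insert_self _ _
      · rintro ⟨T, t⟩ hx
        rw [Finset.mem_sigma] at hx
        obtain ⟨hT, ht⟩ := hx
        obtain ⟨hTsub, hTcard⟩ := Finset.mem_powersetCard.mp hT
        rw [Finset.mem_sigma]
        constructor
        · rw [Finset.mem_powersetCard]
          refine ⟨le_trans (Finset.erase_subset t T) hTsub, ?_⟩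
          rw [Finset.card_erase_of_mem ht, hTcard]
          omega
        · rw [Finset.mem_sdiff]
          exact ⟨hTsub ht, Finset.notMem_erase t T⟩
      · rintro ⟨S, t⟩ hx
        rw [Finset.mem_sigma] at hx
        obtain ⟨_, ht⟩ := hx
        rw [Finset.mem_sdiff] at ht
        simp [Finset.erase_insert ht.2]
      · rintro ⟨T, t⟩ hx
        rw [Finset.mem_sigma] at hx
        simp [Finset.insert_erase hx.2]
      · rintro ⟨S, t⟩ _
        rfl
    calc ((d - m : ℕ) : ℝ) * c m = _ := lhs
      _ ≤ _ := step
      _ = _ := bij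
      _ = ((m + 1 : ℕ) : ℝ) * c (m + 1) := rhs.symm
  -- monotonicity of h
  have h0eq : h 0 = avg := by simp [hh]
  have h1eq : h 1 = avg := by
    rw [hh]
    simp only [one_ne_zero, if_false, hc1, Nat.choose_one_right]
    rw [havg, one_div, inv_mul_eq_div]
  have hmono : ∀ m, m < d → h m ≤ h (m + 1) := by
    intro m hmd
    rcases Nat.eq_zero_or_pos m with rfl | hm1
    · rw [h0eq, ← h1eq]
    · have hmd' : m ≤ d := le_of_lt hmd
      have hm1d : m + 1 ≤ d := hmd
      have hchm : (0 : ℝ) < (d.choose m : ℝ) := by exact_mod_cast Nat.choose_pos hmd'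
      have hchm1 : (0 : ℝ) < (d.choose (m + 1) : ℝ) := by exact_mod_cast Nat.choose_pos hm1d
      have hid : ((d.choose (m + 1) : ℕ) : ℝ) * ((m + 1 : ℕ) : ℝ)
          = ((d.choose m : ℕ) : ℝ) * ((d - m : ℕ) : ℝ) := by
        exact_mod_cast congrArg (Nat.cast : ℕ → ℝ) (Nat.choose_succ_right_eq d m)
      have hmul : (c m * (d.choose (m + 1) : ℝ)) * ((m + 1 : ℕ) : ℝ)
          ≤ (c (m + 1) * (d.choose m : ℝ)) * ((m + 1 : ℕ) : ℝ) := by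
        have e1 : (c m * (d.choose (m + 1) : ℝ)) * ((m + 1 : ℕ) : ℝ)
            = (d.choose m : ℝ) * (((d - m : ℕ) : ℝ) * c m) := by
          rw [mul_assoc, hid]; ring
        have e2 : (c (m + 1) * (d.choose m : ℝ)) * ((m + 1 : ℕ) : ℝ)
            = (d.choose m : ℝ) * (((m + 1 : ℕ) : ℝ) * c (m + 1)) := by ring
        rw [e1, e2]
        exact mul_le_mul_of_nonneg_left (key m hm1 hmd) (Nat.cast_nonneg _)
      have hmp : (0 : ℝ) < ((m + 1 : ℕ) : ℝ) := by positivity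
      rw [hh]
      simp only [if_neg (by omega : ¬ m = 0), if_neg (by omega : ¬ m + 1 = 0)]
      rw [div_le_div_iff₀ hchm hchm1]
      exact le_of_mul_le_mul_right hmul hmp
  -- evaluation identity
  have hrange : Finset.range (d + 1) = insert 0 (Finset.Icc 1 d) := by
    ext k; simp only [Finset.mem_range, Finset.mem_insert, Finset.mem_Icc]; omega
  have hEval : ∀ x : ℝ, sggProgress G a s x
      = ∑ m ∈ Finset.range (d + 1), h m * (bernsteinPolynomial ℝ d m).eval x := by
    intro x
    have hB0 : (bernsteinPolynomial ℝ d 0).eval x = (1 - x) ^ d := by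
      simp [bernsteinPolynomial]
    have hterm : ∀ m ∈ Finset.Icc 1 d, h m * (bernsteinPolynomial ℝ d m).eval x
        = x ^ m * (1 - x) ^ (d - m) * c m := by
      intro m hm
      obtain ⟨hm1, hmd⟩ := Finset.mem_Icc.mp hm
      have hch : (0 : ℝ) < (d.choose m : ℝ) := by exact_mod_cast Nat.choose_pos hmd
      rw [hh]
      simp only [if_neg (by omega : ¬ m = 0)]
      simp only [bernsteinPolynomial, Polynomial.eval_mul, Polynomial.eval_pow,
        Polynomial.eval_natCast, Polynomial.eval_X, Polynomial.eval_sub, Polynomial.eval_one]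
      field_simp
    rw [hrange, Finset.sum_insert (by simp), hB0, Finset.sum_congr rfl hterm]
    unfold sggProgress
    rw [← hNdef, ← hd, ← hf]
    rw [h0eq, havg]
    have : ∀ m ∈ Finset.Icc 1 d,
        x ^ m * (1 - x) ^ (d - m) * ∑ S ∈ N.powersetCard m, finsetMax f S
        = x ^ m * (1 - x) ^ (d - m) * c m := by
      intro m _; rw [hc]
    rw [Finset.sum_congr rfl this]
    ring
  rw [hEval p, hEval q]
  exact bern_sum_mono d h hmono hp hpq hq
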